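/- For real y, z with 0 ≤ y < 1 and 0 ≤ z < 1 (the 2D triangle VPV identity, case a=0, b=1): ∑_{(j,k): 1 ≤ j ≤ k, gcd(j,k)=1} (1/k) · log(1/(1 - y^j z^k)) = (y/(1-y)) · log((1-yz)/(1-z)). Equivalently, ∏_{1≤j≤k, gcd(j,k)=1} (1/(1 - y^j z^k))^{1/k} = ((1-yz)/(1-z))^{y/(1-y)}. -/

import Mathlib

open Real

private lemma hasSum_pnat_log {x : ℝ} (h0 : 0 ≤ x) (h1 : x < 1) :
    HasSum (fun m : ℕ+ => x ^ (m : ℕ) / (m : ℕ)) (-Real.log (1 - x)) := by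
  have h := hasSum_pow_div_log_of_abs_lt_one (x := x) (by rwa [abs_of_nonneg h0])
  have h2 : HasSum ((fun n : ℕ => x ^ (n + 1) / (n + 1)) ∘ (Equiv.pnatEquivNat))
      (-Real.log (1 - x)) := (Equiv.pnatEquivNat.hasSum_iff).mpr h
  have heq : (fun m : ℕ+ => x ^ (m : ℕ) / (m : ℕ))
      = ((fun n : ℕ => x ^ (n + 1) / (n + 1)) ∘ (Equiv.pnatEquivNat)) := by
    funext m
    simp only [Function.comp, Equiv.pnatEquivNat_apply]
    have : m.natPred + 1 = (m : ℕ) := PNat.natPred_add_one m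
    rw [show ((m.natPred : ℝ) + 1) = ((m.natPred + 1 : ℕ) : ℝ) by push_cast; ring, this]
  rw [heq]; exact h2

private def eFun :
    ({p : ℕ+ × ℕ+ // p.1 ≤ p.2 ∧ Nat.gcd (p.1 : ℕ) (p.2 : ℕ) = 1} × ℕ+) →
      Σ n : ℕ+, Fin (n : ℕ) :=
  fun x => ⟨x.1.val.2 * x.2, ⟨(x.1.val.1 : ℕ) * (x.2 : ℕ) - 1, by
    have h1 : 1 ≤ (x.1.val.1 : ℕ) * (x.2 : ℕ) :=
      Nat.one_le_iff_ne_zero.mpr (by positivity)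
    have h2 : (x.1.val.1 : ℕ) * (x.2 : ℕ) ≤ (x.1.val.2 : ℕ) * (x.2 : ℕ) :=
      Nat.mul_le_mul_right _ x.1.prop.1
    simp only [PNat.mul_coe]
    omega⟩⟩

private lemma eFun_bij : Function.Bijective eFun := by
  constructor
  · rintro ⟨⟨⟨j₁, k₁⟩, hle₁, hg₁⟩, m₁⟩ ⟨⟨⟨j₂, k₂⟩, hle₂, hg₂⟩, m₂⟩ h
    simp only [eFun, Sigma.mk.inj_iff] at h
    obtain ⟨hk, hj⟩ := h
    have hkn : (k₁ : ℕ) * (m₁ : ℕ) = (k₂ : ℕ) * (m₂ : ℕ) := by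
      have := congrArg (fun t : ℕ+ => (t : ℕ)) hk
      simpa [PNat.mul_coe] using this
    have hjv : (j₁ : ℕ) * (m₁ : ℕ) - 1 = (j₂ : ℕ) * (m₂ : ℕ) - 1 := by
      have hB : ((k₁ * m₁ : ℕ+) : ℕ) = ((k₂ * m₂ : ℕ+) : ℕ) := by rw [hk]
      exact (Fin.heq_ext_iff hB).mp hj
    have h1 : 1 ≤ (j₁ : ℕ) * (m₁ : ℕ) := Nat.one_le_iff_ne_zero.mpr (by positivity)
    have h2 : 1 ≤ (j₂ : ℕ) * (m₂ : ℕ) := Nat.one_le_iff_ne_zero.mpr (by positivity)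
    have hjn : (j₁ : ℕ) * (m₁ : ℕ) = (j₂ : ℕ) * (m₂ : ℕ) := by omega
    have hm : (m₁ : ℕ) = (m₂ : ℕ) := by
      have g1 : Nat.gcd ((j₁ : ℕ) * m₁) ((k₁ : ℕ) * m₁) = (m₁ : ℕ) := by
        rw [Nat.gcd_mul_right, hg₁, one_mul]
      have g2 : Nat.gcd ((j₂ : ℕ) * m₂) ((k₂ : ℕ) * m₂) = (m₂ : ℕ) := by
        rw [Nat.gcd_mul_right, hg₂, one_mul]
      rw [← g1, ← g2, hjn, hkn]
    have hm' : m₁ = m₂ := PNat.coe_injective hm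
    have hj' : j₁ = j₂ := PNat.coe_injective
      (Nat.eq_of_mul_eq_mul_right m₁.pos (by rw [hjn, hm]))
    have hk' : k₁ = k₂ := PNat.coe_injective
      (Nat.eq_of_mul_eq_mul_right m₁.pos (by rw [hkn, hm]))
    subst hm' hj' hk'
    rfl
  · rintro ⟨n, i⟩
    have hiN : (i : ℕ) + 1 ≤ (n : ℕ) := i.isLt
    have hi1 : 1 ≤ (i : ℕ) + 1 := by omega
    set d : ℕ := Nat.gcd ((i : ℕ) + 1) (n : ℕ) with hd
    have hdpos : 0 < d := Nat.gcd_pos_of_pos_left _ (by omega)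
    have hdl : d ∣ (i : ℕ) + 1 := Nat.gcd_dvd_left _ _
    have hdr : d ∣ (n : ℕ) := Nat.gcd_dvd_right _ _
    have hjpos : 0 < ((i : ℕ) + 1) / d := Nat.div_pos (Nat.le_of_dvd (by omega) hdl) hdpos
    have hkpos : 0 < (n : ℕ) / d :=
      Nat.div_pos (Nat.le_of_dvd (by exact_mod_cast n.pos) hdr) hdpos
    have hjk : ((i : ℕ) + 1) / d ≤ (n : ℕ) / d := Nat.div_le_div_right hiN
    have hcop : Nat.Coprime (((i : ℕ) + 1) / d) ((n : ℕ) / d) :=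
      Nat.coprime_div_gcd_div_gcd hdpos
    refine ⟨⟨⟨⟨⟨((i : ℕ) + 1) / d, hjpos⟩, ⟨(n : ℕ) / d, hkpos⟩⟩, hjk, hcop⟩, ⟨d, hdpos⟩⟩, ?_⟩
    have hkd : ((n : ℕ) / d) * d = (n : ℕ) := Nat.div_mul_cancel hdr
    have hjd : (((i : ℕ) + 1) / d) * d = (i : ℕ) + 1 := Nat.div_mul_cancel hdl
    have hfst : ((⟨(n : ℕ) / d, hkpos⟩ : ℕ+) * ⟨d, hdpos⟩) = n :=
      PNat.coe_injective (by show (n : ℕ) / d * d = (n : ℕ); exact hkd)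
    refine Sigma.ext hfst
      ((Fin.heq_ext_iff (congrArg (fun t : ℕ+ => (t : ℕ)) hfst)).mpr ?_)
    simp only [eFun, PNat.mk_coe, PNat.mul_coe]
    omega

private noncomputable def eEquiv :
    ({p : ℕ+ × ℕ+ // p.1 ≤ p.2 ∧ Nat.gcd (p.1 : ℕ) (p.2 : ℕ) = 1} × ℕ+) ≃
      Σ n : ℕ+, Fin (n : ℕ) := Equiv.ofBijective eFun eFun_bij

theorem stmt_9 (y z : ℝ) (hy0 : 0 ≤ y) (hy1 : y < 1) (hz0 : 0 ≤ z) (hz1 : z < 1) :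
    (∑' p : {p : ℕ+ × ℕ+ // p.1 ≤ p.2 ∧ Nat.gcd (p.1 : ℕ) (p.2 : ℕ) = 1},
        (1 / (p.val.2 : ℝ)) *
          Real.log (1 / (1 - y ^ (p.val.1 : ℕ) * z ^ (p.val.2 : ℕ))) =
      y / (1 - y) * Real.log ((1 - y * z) / (1 - z))) ∧
    (∏' p : {p : ℕ+ × ℕ+ // p.1 ≤ p.2 ∧ Nat.gcd (p.1 : ℕ) (p.2 : ℕ) = 1},
        (1 / (1 - y ^ (p.val.1 : ℕ) * z ^ (p.val.2 : ℕ))) ^ ((1 : ℝ) / (p.val.2 : ℝ)) =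
      ((1 - y * z) / (1 - z)) ^ (y / (1 - y))) := by
  have hz1' : (0:ℝ) < 1 - z := by linarith
  have hyz0 : 0 ≤ y * z := mul_nonneg hy0 hz0
  have hyzlt : y * z < 1 := lt_of_le_of_lt (by nlinarith) hz1
  have hyz1' : (0:ℝ) < 1 - y * z := by linarith
  have hy1' : (1:ℝ) - y ≠ 0 := by intro h; linarith [sub_eq_zero.mp h]
  set S := y / (1 - y) * Real.log ((1 - y * z) / (1 - z)) with hSdef
  have hzs : HasSum (fun n : ℕ+ => z ^ (n : ℕ) / (n : ℕ)) (-Real.log (1 - z)) :=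
    hasSum_pnat_log hz0 hz1
  have hyzs : HasSum (fun n : ℕ+ => (y * z) ^ (n : ℕ) / (n : ℕ)) (-Real.log (1 - y * z)) :=
    hasSum_pnat_log hyz0 hyzlt
  -- sum of the closed-form fiber values
  set c : ℕ+ → ℝ := fun n => y / (1 - y) * ((z ^ (n : ℕ) - (y * z) ^ (n : ℕ)) / (n : ℕ))
    with hcdef
  have hcS : HasSum c S := by
    have h := (hzs.sub hyzs).mul_left (y / (1 - y))
    have hfun : c = fun n : ℕ+ =>
        y / (1 - y) * (z ^ (n : ℕ) / (n : ℕ) - (y * z) ^ (n : ℕ) / (n : ℕ)) := by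
      funext n; rw [hcdef]; ring
    rw [hfun]
    convert h using 1
    · exact rfl
    rw [hSdef, Real.log_div hyz1'.ne' hz1'.ne']
    ring
  -- the sigma-indexed family
  set f : (Σ n : ℕ+, Fin (n : ℕ)) → ℝ :=
    fun x => y ^ ((x.2 : ℕ) + 1) * z ^ ((x.1 : ℕ)) / ((x.1 : ℕ)) with hfdef
  have hfib : ∀ n : ℕ+, HasSum (fun i : Fin (n : ℕ) => f ⟨n, i⟩) (c n) := by
    intro n
    have hfin := hasSum_fintype (fun i : Fin (n : ℕ) => f ⟨n, i⟩)
    convert hfin using 1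
    rw [hcdef]
    have hNpos : (0:ℝ) < (n : ℕ) := by exact_mod_cast n.pos
    rw [hfdef]
    simp only
    rw [Fin.sum_univ_eq_sum_range (fun i => y ^ (i + 1) * z ^ (n : ℕ) / (n : ℕ))]
    have : ∀ i, y ^ (i + 1) * z ^ (n : ℕ) / (n : ℕ)
        = y ^ i * (y * z ^ (n : ℕ) / (n : ℕ)) := by
      intro i; rw [pow_succ]; ring
    simp only [this]
    rw [← Finset.sum_mul, geom_sum_eq (by intro h; rw [h] at hy1; linarith)]
    rw [mul_pow]
    have hy1'' : y - 1 ≠ 0 := by intro h; rw [sub_eq_zero] at h; rw [h] at hy1; linarith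
    have hN' : (((n : ℕ) : ℝ)) ≠ 0 := hNpos.ne'
    field_simp
    ring
  have hfnonneg : ∀ x, 0 ≤ f x := by
    intro x
    apply div_nonneg (mul_nonneg (pow_nonneg hy0 _) (pow_nonneg hz0 _))
    positivity
  have hfsummable : Summable f := by
    rw [summable_sigma_of_nonneg hfnonneg]
    refine ⟨fun n => (hasSum_fintype _).summable, ?_⟩
    have : (fun n : ℕ+ => ∑' i : Fin (n : ℕ), f ⟨n, i⟩) = c := by
      funext n; exact (hfib n).tsum_eq
    rw [this]
    exact hcS.summable
  have hf : HasSum f S := hcS.sigma_of_hasSum hfib hfsummable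
  have hG : HasSum (f ∘ eEquiv) S := eEquiv.hasSum_iff.mpr hf
  -- per-pair sums
  set t : {p : ℕ+ × ℕ+ // p.1 ≤ p.2 ∧ Nat.gcd (p.1 : ℕ) (p.2 : ℕ) = 1} → ℝ :=
    fun p => (1 / (p.val.2 : ℝ)) *
      Real.log (1 / (1 - y ^ (p.val.1 : ℕ) * z ^ (p.val.2 : ℕ))) with htdef
  have hpair : ∀ p, HasSum (fun m : ℕ+ => (f ∘ eEquiv) (p, m)) (t p) := by
    rintro ⟨⟨j, k⟩, hle, hg⟩
    set x : ℝ := y ^ (j : ℕ) * z ^ (k : ℕ) with hxdef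
    have hx0 : 0 ≤ x := mul_nonneg (pow_nonneg hy0 _) (pow_nonneg hz0 _)
    have hx1 : x < 1 := by
      calc x ≤ 1 * z ^ (k : ℕ) := by
              apply mul_le_mul_of_nonneg_right (pow_le_one₀ hy0 hy1.le) (pow_nonneg hz0 _)
        _ = z ^ (k : ℕ) := one_mul _
        _ < 1 := pow_lt_one₀ hz0 hz1 k.pos.ne'
    have hbase := (hasSum_pnat_log hx0 hx1).mul_left (1 / (k : ℝ))
    have hfun : (fun m : ℕ+ => (f ∘ eEquiv) (⟨⟨j, k⟩, hle, hg⟩, m))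
        = fun m : ℕ+ => 1 / (k : ℝ) * (x ^ (m : ℕ) / (m : ℕ)) := by
      funext m
      show f (eFun (⟨⟨j, k⟩, hle, hg⟩, m)) = _
      simp only [eFun, hfdef]
      have h1 : 1 ≤ (j : ℕ) * (m : ℕ) := Nat.one_le_iff_ne_zero.mpr (by positivity)
      have hexp : (j : ℕ) * (m : ℕ) - 1 + 1 = (j : ℕ) * (m : ℕ) := by omega
      rw [hexp]
      rw [hxdef, mul_pow, ← pow_mul, ← pow_mul, PNat.mul_coe]
      have hkm : (0:ℝ) < ((k : ℕ) * (m : ℕ) : ℕ) := by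
        exact_mod_cast Nat.mul_pos k.pos m.pos
      push_cast
      rw [mul_comm (j:ℕ) (m:ℕ), mul_comm (k:ℕ) (m:ℕ)]
      field_simp
    rw [hfun]
    convert hbase using 1
    · exact rfl
    rw [htdef]
    simp only
    rw [one_div (1 - x), Real.log_inv]
  have hC : HasSum t S := hG.prod_fiberwise hpair
  constructor
  · exact hC.tsum_eq
  · have hP : HasProd (fun p => Real.exp (t p)) (Real.exp S) := by
      have h := (Real.continuous_exp.continuousAt (x := S)).tendsto.comp hC
      have h2 : (Real.exp ∘ fun s => ∑ b ∈ s, t b)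
          = fun s : Finset _ => ∏ x ∈ s, Real.exp (t x) := by
        funext s; simp [Real.exp_sum]
      rw [HasProd]
      rw [h2] at h
      exact h
    have hfactor : (fun p : {p : ℕ+ × ℕ+ // p.1 ≤ p.2 ∧ Nat.gcd (p.1 : ℕ) (p.2 : ℕ) = 1} =>
        (1 / (1 - y ^ (p.val.1 : ℕ) * z ^ (p.val.2 : ℕ))) ^ ((1 : ℝ) / (p.val.2 : ℝ)))
        = fun p => Real.exp (t p) := by
      funext p
      have hx1 : y ^ (p.val.1 : ℕ) * z ^ (p.val.2 : ℕ) < 1 := by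
        calc y ^ (p.val.1 : ℕ) * z ^ (p.val.2 : ℕ)
            ≤ 1 * z ^ (p.val.2 : ℕ) := by
              apply mul_le_mul_of_nonneg_right (pow_le_one₀ hy0 hy1.le) (pow_nonneg hz0 _)
          _ = z ^ (p.val.2 : ℕ) := one_mul _
          _ < 1 := pow_lt_one₀ hz0 hz1 p.val.2.pos.ne'
      have hpos : (0:ℝ) < 1 / (1 - y ^ (p.val.1 : ℕ) * z ^ (p.val.2 : ℕ)) := by
        apply div_pos one_pos; linarith
      rw [Real.rpow_def_of_pos hpos, htdef]
      ring_nf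
    rw [hfactor, hP.tprod_eq]
    rw [Real.rpow_def_of_pos (div_pos hyz1' hz1'), hSdef]
    ring_nf
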